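/- Let Λ = Σ_{i=1}^r λ_i 1_{ζ_i} with λ_i ≠ 0 and ζ_i ∈ K^n pairwise distinct, and let e_1,...,e_r ∈ R be interpolation polynomials with e_i(ζ_j) = δ_{ij}. Then the images of e_1,...,e_r form a basis of A_Λ = R/I_Λ, and for a ∈ R the multiplication operator M_a is diagonal in this basis with M_a(e_i) = a(ζ_i) e_i. -/
import Mathlib

open MvPolynomial

/-- The Hankel operator `H_Λ : p ↦ (q ↦ Λ(pq))`. -/
noncomputable def hankelOp (K : Type*) [Field K] (n : ℕ)
    (Λ : Module.Dual K (MvPolynomial (Fin n) K)) :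
    MvPolynomial (Fin n) K →ₗ[K] Module.Dual K (MvPolynomial (Fin n) K) :=
  (LinearMap.mul K (MvPolynomial (Fin n) K)).compr₂ Λ

/-- The kernel ideal `I_Λ = {p : ∀ q, Λ(pq) = 0}`. -/
def hankelIdeal (K : Type*) [Field K] (n : ℕ)
    (Λ : Module.Dual K (MvPolynomial (Fin n) K)) : Ideal (MvPolynomial (Fin n) K) where
  carrier := {p | ∀ q, Λ (p * q) = 0}
  add_mem' := by
    intro a b ha hb q
    rw [Set.mem_setOf_eq] at ha hb
    rw [add_mul, map_add, ha q, hb q, add_zero]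
  zero_mem' := by
    intro q
    rw [zero_mul, map_zero]
  smul_mem' := by
    intro c p hp q
    rw [Set.mem_setOf_eq] at hp
    have h : (c • p) * q = p * (c * q) := by rw [smul_eq_mul]; ring
    rw [h]
    exact hp _

/-- The evaluation functional `1_ζ : p ↦ p(ζ)`. -/
noncomputable def evalDual (K : Type*) [Field K] (n : ℕ) (ζ : Fin n → K) :
    Module.Dual K (MvPolynomial (Fin n) K) :=
  (MvPolynomial.aeval ζ).toLinearMap

/-- If `Λ = Σ λ_i 1_{ζ_i}` and `e_i` are interpolation polynomials at the `ζ_i`, then the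
images of the `e_i` form a basis of `A_Λ` in which multiplication by `a` is diagonal with
`M_a(e_i) = a(ζ_i) e_i`. -/
theorem interpolation_basis_diagonalizes_multiplication (K : Type*) [Field K] (n r : ℕ)
    (Λ : Module.Dual K (MvPolynomial (Fin n) K))
    (lam : Fin r → K) (ζ : Fin r → (Fin n → K))
    (hlam : ∀ i, lam i ≠ 0) (hinj : Function.Injective ζ)
    (hΛ : Λ = ∑ i, lam i • evalDual K n (ζ i))
    (e : Fin r → MvPolynomial (Fin n) K)
    (he : ∀ i j, MvPolynomial.eval (ζ j) (e i) = if i = j then 1 else 0) :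
    LinearIndependent K (fun i => Ideal.Quotient.mk (hankelIdeal K n Λ) (e i)) ∧
    Submodule.span K (Set.range fun i => Ideal.Quotient.mk (hankelIdeal K n Λ) (e i)) = ⊤ ∧
    ∀ (a : MvPolynomial (Fin n) K) (i : Fin r),
      Ideal.Quotient.mk (hankelIdeal K n Λ) (a * e i)
        = MvPolynomial.eval (ζ i) a • Ideal.Quotient.mk (hankelIdeal K n Λ) (e i) := by
  have haev : ∀ (z : Fin n → K) (p : MvPolynomial (Fin n) K),
      MvPolynomial.aeval z p = MvPolynomial.eval z p := by
    intro z p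
    exact congrFun (congrArg (fun (f : MvPolynomial (Fin n) K →+* K) => (f : _ → _))
      (MvPolynomial.coe_aeval_eq_eval z)) p
  have hΛ' : ∀ p : MvPolynomial (Fin n) K,
      Λ p = ∑ i, lam i * MvPolynomial.eval (ζ i) p := by
    intro p
    rw [hΛ]
    simp only [LinearMap.sum_apply, LinearMap.smul_apply, evalDual,
      AlgHom.toLinearMap_apply, smul_eq_mul, haev]
  have hmem : ∀ p : MvPolynomial (Fin n) K,
      p ∈ hankelIdeal K n Λ ↔ ∀ i, MvPolynomial.eval (ζ i) p = 0 := by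
    intro p
    constructor
    · intro hp i
      have h := hp (e i)
      rw [hΛ'] at h
      simp only [map_mul, he] at h
      rw [Finset.sum_eq_single i (fun j _ hj => by simp [Ne.symm hj])
        (fun h => absurd (Finset.mem_univ i) h)] at h
      simp only [if_pos rfl, mul_one] at h
      rcases mul_eq_zero.mp h with h1 | h2
      · exact absurd h1 (hlam i)
      · simpa using h2
    · intro h q
      rw [hΛ']
      apply Finset.sum_eq_zero
      intro i _
      rw [map_mul, h i, zero_mul, mul_zero]
  have hsmul : ∀ (k : K) (x : MvPolynomial (Fin n) K),
      k • Ideal.Quotient.mk (hankelIdeal K n Λ) x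
        = Ideal.Quotient.mk (hankelIdeal K n Λ) (k • x) := by
    intro k x
    rw [MvPolynomial.smul_eq_C_mul, map_mul, ← MvPolynomial.algebraMap_eq,
      Ideal.Quotient.mk_algebraMap, ← Algebra.smul_def]
  refine ⟨?_, ?_, ?_⟩
  · rw [Fintype.linearIndependent_iff]
    intro c hc i
    have hmem' : (∑ j, c j • e j) ∈ hankelIdeal K n Λ := by
      rw [← Ideal.Quotient.eq_zero_iff_mem, map_sum]
      simp only [← hsmul]
      exact hc
    have h := (hmem _).mp hmem' i
    simp only [map_sum, MvPolynomial.smul_eval, he] at h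
    simpa using h
  · rw [Submodule.eq_top_iff']
    intro x
    obtain ⟨p, rfl⟩ := Ideal.Quotient.mk_surjective x
    have hdiff : p - ∑ i, MvPolynomial.eval (ζ i) p • e i ∈ hankelIdeal K n Λ := by
      rw [hmem]
      intro j
      simp [map_sum, MvPolynomial.smul_eval, he, Finset.sum_ite_eq]
    have key : Ideal.Quotient.mk (hankelIdeal K n Λ) p
        = ∑ i, MvPolynomial.eval (ζ i) p • Ideal.Quotient.mk (hankelIdeal K n Λ) (e i) := by
      rw [Ideal.Quotient.eq.mpr hdiff, map_sum]
      simp only [hsmul]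
    rw [key]
    exact Submodule.sum_mem _ fun i _ =>
      Submodule.smul_mem _ _ (Submodule.subset_span ⟨i, rfl⟩)
  · intro a i
    rw [hsmul, Ideal.Quotient.eq, hmem]
    intro j
    by_cases hij : i = j
    · subst hij
      simp [MvPolynomial.smul_eval, he]
    · simp [MvPolynomial.smul_eval, he, Ne.symm hij, hij]
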